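/- Let T be a tournament on n vertices and let π be any vertex ordering of T that sorts the vertices by non-decreasing in-degree (i.e., d⁻(u) < d⁻(v) implies π(u) < π(v)). Then π simultaneously achieves the cutwidth and the OLA-cost of T: ctw(T, π) = ctw(T) and OLA(T, π) = OLA(T). -/

import Mathlib

open Finset

variable {V : Type*} [Fintype V] [DecidableEq V]

/-- The set of the first `i` vertices in the vertex ordering `π`. -/
def prefixSet (π : V ≃ Fin (Fintype.card V)) (i : ℕ) : Finset V :=
  Finset.univ.filter (fun v => (π v : ℕ) < i)

/-- The set of the last `n - i` vertices in the vertex ordering `π`. -/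
def suffixSet (π : V ≃ Fin (Fintype.card V)) (i : ℕ) : Finset V :=
  Finset.univ.filter (fun v => i ≤ (π v : ℕ))

/-- The cut at position `i`: the arcs from outside the length-`i` prefix into the prefix. -/
def cutFinset (E : V → V → Prop) [DecidableRel E]
    (π : V ≃ Fin (Fintype.card V)) (i : ℕ) : Finset (V × V) :=
  Finset.univ.filter (fun p : V × V => E p.1 p.2 ∧ i ≤ (π p.1 : ℕ) ∧ (π p.2 : ℕ) < i)

/-- The size of the cut at position `i`. -/
def cutSize (E : V → V → Prop) [DecidableRel E]
    (π : V ≃ Fin (Fintype.card V)) (i : ℕ) : ℕ :=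
  (cutFinset E π i).card

/-- The width of a vertex ordering. -/
def widthOf (E : V → V → Prop) [DecidableRel E] (π : V ≃ Fin (Fintype.card V)) : ℕ :=
  (Finset.range (Fintype.card V + 1)).sup (cutSize E π)

/-- The cutwidth of a digraph. -/
noncomputable def cutwidth (E : V → V → Prop) [DecidableRel E] : ℕ :=
  sInf {w | ∃ π : V ≃ Fin (Fintype.card V), widthOf E π = w}

/-- The OLA-cost of a vertex ordering. -/
def olaOf (E : V → V → Prop) [DecidableRel E] (π : V ≃ Fin (Fintype.card V)) : ℕ :=
  ∑ i ∈ Finset.range (Fintype.card V + 1), cutSize E π i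

/-- The OLA-cost of a digraph. -/
noncomputable def ola (E : V → V → Prop) [DecidableRel E] : ℕ :=
  sInf {w | ∃ π : V ≃ Fin (Fintype.card V), olaOf E π = w}

/-- The in-degree of a vertex. -/
def inDeg (E : V → V → Prop) [DecidableRel E] (u : V) : ℕ :=
  (Finset.univ.filter (fun v => E v u)).card

section Aux

variable (E : V → V → Prop) [DecidableRel E]

lemma two_mul_choose_two (i : ℕ) : 2 * Nat.choose i 2 = i * (i - 1) := by
  induction i with
  | zero => simp
  | succ m ih =>
    rw [Nat.choose_succ_succ, Nat.choose_one_right, Nat.mul_add, ih]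
    cases m with
    | zero => simp
    | succ k => simp [Nat.succ_sub_one]; ring

omit [DecidableEq V] in
lemma card_prefixSet (σ : V ≃ Fin (Fintype.card V)) (i : ℕ) (hi : i ≤ Fintype.card V) :
    (prefixSet σ i).card = i := by
  rw [show i = (Finset.range i).card from (Finset.card_range i).symm]
  apply Finset.card_bij (fun v _ => (σ v : ℕ))
  · intro v hv
    simp only [prefixSet, mem_filter] at hv
    simpa using hv.2
  · intro a ha b hb h
    exact σ.injective (Fin.val_injective h)
  · intro j hj
    simp only [Finset.mem_range] at hj
    refine ⟨σ.symm ⟨j, lt_of_lt_of_le hj hi⟩, ?_, by simp⟩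
    simp [prefixSet, hj]

/-- Number of arcs with both endpoints inside the prefix is `i.choose 2`. -/
lemma card_inside (hirr : ∀ u : V, ¬ E u u)
    (htour : ∀ u v : V, u ≠ v → (E u v ↔ ¬ E v u))
    (σ : V ≃ Fin (Fintype.card V)) (i : ℕ) (hi : i ≤ Fintype.card V) :
    (Finset.univ.filter (fun p : V × V =>
        E p.1 p.2 ∧ (σ p.1 : ℕ) < i ∧ (σ p.2 : ℕ) < i)).card = Nat.choose i 2 := by
  set P := prefixSet σ i with hP
  have hins : Finset.univ.filter (fun p : V × V =>
      E p.1 p.2 ∧ (σ p.1 : ℕ) < i ∧ (σ p.2 : ℕ) < i)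
      = P.offDiag.filter (fun p => E p.1 p.2) := by
    ext p
    simp only [mem_filter, mem_univ, true_and, Finset.mem_offDiag, hP, prefixSet]
    constructor
    · rintro ⟨he, h1, h2⟩
      exact ⟨⟨by simpa using h1, by simpa using h2,
        fun hpe => hirr p.2 (hpe ▸ he)⟩, he⟩
    · rintro ⟨⟨h1, h2, -⟩, he⟩
      exact ⟨he, by simpa using h1, by simpa using h2⟩
  rw [hins]
  have hcardeq : (P.offDiag.filter (fun p => E p.1 p.2)).card
      = (P.offDiag.filter (fun p => ¬ E p.1 p.2)).card := by
    apply Finset.card_nbij' (fun p => p.swap) (fun p => p.swap)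
    · intro p hp
      simp only [Finset.mem_coe, mem_filter, Finset.mem_offDiag, Prod.fst_swap, Prod.snd_swap] at hp ⊢
      obtain ⟨⟨h1, h2, hne⟩, he⟩ := hp
      refine ⟨⟨h2, h1, hne.symm⟩, ?_⟩
      intro hvu
      exact (htour p.2 p.1 hne.symm).mp hvu he
    · intro p hp
      simp only [Finset.mem_coe, mem_filter, Finset.mem_offDiag, Prod.fst_swap, Prod.snd_swap] at hp ⊢
      obtain ⟨⟨h1, h2, hne⟩, he⟩ := hp
      exact ⟨⟨h2, h1, hne.symm⟩, (htour p.2 p.1 hne.symm).mpr he⟩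
    · intro p _; simp
    · intro p _; simp
  have hsplit := Finset.card_filter_add_card_filter_not
    (s := P.offDiag) (fun p : V × V => E p.1 p.2)
  have hoff : P.offDiag.card = i * i - i := by
    rw [Finset.offDiag_card, card_prefixSet σ i hi]
  have h2 : 2 * Nat.choose i 2 = i * i - i := by
    rw [two_mul_choose_two]
    cases i with
    | zero => simp
    | succ k =>
      have hh : (k+1)*(k+1) = (k+1)*k + (k+1) := by ring
      simp only [Nat.succ_sub_one]
      omega
  omega

/-- The key identity: `cutSize + C(i,2) = sum of in-degrees over the prefix`. -/
lemma cut_plus_choose (hirr : ∀ u : V, ¬ E u u)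
    (htour : ∀ u v : V, u ≠ v → (E u v ↔ ¬ E v u))
    (σ : V ≃ Fin (Fintype.card V)) (i : ℕ) (hi : i ≤ Fintype.card V) :
    cutSize E σ i + Nat.choose i 2 = ∑ v ∈ prefixSet σ i, inDeg E v := by
  set T := Finset.univ.filter (fun p : V × V => E p.1 p.2 ∧ (σ p.2 : ℕ) < i) with hT
  have hTsum : T.card = ∑ v ∈ prefixSet σ i, inDeg E v := by
    rw [Finset.card_eq_sum_card_fiberwise (f := Prod.snd) (t := prefixSet σ i)
      (by intro p hp; simp only [hT, Finset.mem_coe, mem_filter, mem_univ, true_and] at hp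
          simp [prefixSet, hp.2])]
    apply Finset.sum_congr rfl
    intro v hv
    simp only [prefixSet, mem_filter, mem_univ, true_and] at hv
    unfold inDeg
    apply Finset.card_bij (fun p _ => p.1)
    · intro p hp
      simp only [hT, Finset.filter_filter, mem_filter, mem_univ, true_and] at hp ⊢
      rw [hp.2] at hp
      exact hp.1.1
    · intro p hp q hq h
      simp only [hT, Finset.filter_filter, mem_filter, mem_univ, true_and] at hp hq
      exact Prod.ext h (hp.2.trans hq.2.symm)
    · intro u hu
      simp only [mem_filter, mem_univ, true_and] at hu
      exact ⟨(u, v), by simp [hT, hu, hv], rfl⟩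
  have hTsplit : cutSize E σ i +
      (Finset.univ.filter (fun p : V × V =>
        E p.1 p.2 ∧ (σ p.1 : ℕ) < i ∧ (σ p.2 : ℕ) < i)).card = T.card := by
    have h := Finset.card_filter_add_card_filter_not
      (s := T) (fun p : V × V => i ≤ (σ p.1 : ℕ))
    have hc : T.filter (fun p : V × V => i ≤ (σ p.1 : ℕ)) = cutFinset E σ i := by
      ext p
      simp only [hT, cutFinset, Finset.filter_filter, mem_filter, mem_univ, true_and]
      tauto
    have hinsd : T.filter (fun p : V × V => ¬ i ≤ (σ p.1 : ℕ))
        = Finset.univ.filter (fun p : V × V =>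
            E p.1 p.2 ∧ (σ p.1 : ℕ) < i ∧ (σ p.2 : ℕ) < i) := by
      ext p
      simp only [hT, Finset.filter_filter, mem_filter, mem_univ, true_and, not_le]
      tauto
    rw [hc, hinsd] at h
    exact h
  rw [← hTsum, ← hTsplit, card_inside E hirr htour σ i hi]

/-- Among sets of equal card, the prefix of a sorted ordering has minimal in-degree sum. -/
lemma sum_prefix_min (π σ : V ≃ Fin (Fintype.card V))
    (hsorted : ∀ u v : V, inDeg E u < inDeg E v → π u < π v) (i : ℕ)
    (hi : i ≤ Fintype.card V) :
    ∑ v ∈ prefixSet π i, inDeg E v ≤ ∑ v ∈ prefixSet σ i, inDeg E v := by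
  set P := prefixSet π i with hPdef
  set S := prefixSet σ i with hSdef
  have hcard : (P \ S).card = (S \ P).card := by
    have h1 := Finset.card_sdiff_add_card_inter P S
    have h2 := Finset.card_sdiff_add_card_inter S P
    rw [Finset.inter_comm] at h2
    rw [card_prefixSet π i hi] at h1
    rw [card_prefixSet σ i hi] at h2
    omega
  have key : ∀ u ∈ P \ S, ∀ v ∈ S \ P, inDeg E u ≤ inDeg E v := by
    intro u hu v hv
    simp only [Finset.mem_sdiff, hPdef, hSdef, prefixSet, mem_filter, mem_univ,
      true_and, not_lt] at hu hv
    by_contra h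
    push_neg at h
    have := hsorted v u h
    omega
  have hdiff : ∑ v ∈ P \ S, inDeg E v ≤ ∑ v ∈ S \ P, inDeg E v := by
    rcases Finset.eq_empty_or_nonempty (S \ P) with he | hne
    · have h0 : (P \ S) = ∅ := Finset.card_eq_zero.mp (by rw [hcard, he]; simp)
      simp [h0]
    · obtain ⟨b₀, hb₀, hb₀min⟩ := Finset.exists_min_image (S \ P) (inDeg E) hne
      calc ∑ v ∈ P \ S, inDeg E v ≤ (P \ S).card • inDeg E b₀ :=
            Finset.sum_le_card_nsmul _ _ _ (fun u hu => key u hu b₀ hb₀)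
        _ = (S \ P).card • inDeg E b₀ := by rw [hcard]
        _ ≤ ∑ v ∈ S \ P, inDeg E v :=
            Finset.card_nsmul_le_sum _ _ _ (fun v hv => hb₀min v hv)
  calc ∑ v ∈ P, inDeg E v = ∑ v ∈ P ∩ S, inDeg E v + ∑ v ∈ P \ S, inDeg E v :=
        (Finset.sum_inter_add_sum_sdiff P S _).symm
    _ ≤ ∑ v ∈ P ∩ S, inDeg E v + ∑ v ∈ S \ P, inDeg E v := by gcongr
    _ = ∑ v ∈ S ∩ P, inDeg E v + ∑ v ∈ S \ P, inDeg E v := by rw [Finset.inter_comm]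
    _ = ∑ v ∈ S, inDeg E v := Finset.sum_inter_add_sum_sdiff S P _

lemma cutSize_le (hirr : ∀ u : V, ¬ E u u)
    (htour : ∀ u v : V, u ≠ v → (E u v ↔ ¬ E v u))
    (π σ : V ≃ Fin (Fintype.card V))
    (hsorted : ∀ u v : V, inDeg E u < inDeg E v → π u < π v) (i : ℕ)
    (hi : i ≤ Fintype.card V) :
    cutSize E π i ≤ cutSize E σ i := by
  have h1 := cut_plus_choose E hirr htour π i hi
  have h2 := cut_plus_choose E hirr htour σ i hi
  have h3 := sum_prefix_min E π σ hsorted i hi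
  omega

end Aux
/-- In a tournament, any ordering sorted by non-decreasing in-degree
simultaneously achieves the cutwidth and the OLA-cost. -/
theorem tournament_sorted_optimal (E : V → V → Prop) [DecidableRel E]
    (hirr : ∀ u : V, ¬ E u u)
    (htour : ∀ u v : V, u ≠ v → (E u v ↔ ¬ E v u))
    (π : V ≃ Fin (Fintype.card V))
    (hsorted : ∀ u v : V, inDeg E u < inDeg E v → π u < π v) :
    widthOf E π = cutwidth E ∧ olaOf E π = ola E := by

  have hle : ∀ σ : V ≃ Fin (Fintype.card V), ∀ i ∈ Finset.range (Fintype.card V + 1),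
      cutSize E π i ≤ cutSize E σ i := by
    intro σ i hi
    exact cutSize_le E hirr htour π σ hsorted i (by simpa [Nat.lt_succ_iff] using hi)
  constructor
  · refine le_antisymm ?_ (Nat.sInf_le ⟨π, rfl⟩)
    refine le_csInf ⟨widthOf E π, ⟨π, rfl⟩⟩ ?_
    rintro w ⟨σ, rfl⟩
    exact Finset.sup_mono_fun (hle σ)
  · refine le_antisymm ?_ (Nat.sInf_le ⟨π, rfl⟩)
    refine le_csInf ⟨olaOf E π, ⟨π, rfl⟩⟩ ?_
    rintro w ⟨σ, rfl⟩
    exact Finset.sum_le_sum (hle σ)
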